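/- arXiv:2305.04306 — 4 statements merged into one kernel-verified Lean document; each statement's English description precedes it below -/
import Mathlib

section
/- If T is a tangle of separations in (X, f) of order k+1, then F = {(A, B) : (B, A) ∈ T} is an ultrafilter of separations of order k+1 on (X, f). -/
open Set

variable {α : Type*}

/-- Symmetry of a set function: `f A = f Aᶜ`. -/
def SymmFn (f : Set α → ℕ) : Prop := ∀ A : Set α, f A = f Aᶜ

/-- Submodularity of a set function. -/
def SubmodFn (f : Set α → ℕ) : Prop :=
  ∀ A B : Set α, f A + f B ≥ f (A ∩ B) + f (A ∪ B)

/-- A separation of the ground set: a partition `(A, B)` of the universe. -/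
def IsSep (p : Set α × Set α) : Prop :=
  p.1 ∪ p.2 = Set.univ ∧ p.1 ∩ p.2 = ∅

/-- Partial order on separations: `(A,B) ≤ (C,D)` iff `A ⊆ C` and `D ⊆ B`. -/
def SepLE (p q : Set α × Set α) : Prop := p.1 ⊆ q.1 ∧ q.2 ⊆ p.2

/-- Tangle of separations of order `k+1`. -/
def IsTangle (f : Set α → ℕ) (k : ℕ) (T : Set (Set α × Set α)) : Prop :=
  (∀ p ∈ T, IsSep p ∧ f p.1 ≤ k) ∧
  (∀ A B : Set α, IsSep (A, B) → f A ≤ k → ((A, B) ∈ T ∨ (B, A) ∈ T)) ∧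
  (∀ e : α, f {e} ≤ k → (({e} : Set α), ({e} : Set α)ᶜ) ∈ T) ∧
  (∀ p₁ ∈ T, ∀ p₂ ∈ T, ∀ p₃ ∈ T,
    p₁.1 ∪ p₂.1 ∪ p₃.1 ≠ (Set.univ : Set α))

/-- Linear tangle of separations of order `k+1`. -/
def IsLinearTangle (f : Set α → ℕ) (k : ℕ) (T : Set (Set α × Set α)) : Prop :=
  (∀ p ∈ T, IsSep p ∧ f p.1 ≤ k) ∧
  (∀ A B : Set α, IsSep (A, B) → f A ≤ k → ((A, B) ∈ T ∨ (B, A) ∈ T)) ∧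
  (∀ e : α, f {e} ≤ k → (({e} : Set α), ({e} : Set α)ᶜ) ∈ T) ∧
  (∀ p₁ ∈ T, ∀ p₂ ∈ T, ∀ e : α, f {e} ≤ k →
    p₁.1 ∪ p₂.1 ∪ {e} ≠ (Set.univ : Set α))

/-- Ultrafilter of separations of order `k+1`. -/
def IsUltraSep (f : Set α → ℕ) (k : ℕ) (F : Set (Set α × Set α)) : Prop :=
  (∀ p ∈ F, IsSep p ∧ f p.1 ≤ k) ∧
  (∀ A B : Set α, IsSep (A, B) → f A ≤ k → ((A, B) ∈ F ∨ (B, A) ∈ F)) ∧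
  ((∅, (Set.univ : Set α)) ∉ F) ∧
  (∀ e : α, f {e} ≤ k → (({e} : Set α), ({e} : Set α)ᶜ) ∉ F) ∧
  (∀ p ∈ F, ∀ q : Set α × Set α, SepLE p q → IsSep q → f q.1 ≤ k → q ∈ F) ∧
  (∀ p ∈ F, ∀ q ∈ F, f (p.1 ∩ q.1) ≤ k → (p.1 ∩ q.1, p.2 ∪ q.2) ∈ F)

/-- Weak ultrafilter of separations of order `k+1`. -/
def IsWeakUltraSep (f : Set α → ℕ) (k : ℕ) (F : Set (Set α × Set α)) : Prop :=
  (∀ p ∈ F, IsSep p ∧ f p.1 ≤ k) ∧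
  (∀ A B : Set α, IsSep (A, B) → f A ≤ k → ((A, B) ∈ F ∨ (B, A) ∈ F)) ∧
  ((∅, (Set.univ : Set α)) ∉ F) ∧
  (∀ e : α, f {e} ≤ k → (({e} : Set α), ({e} : Set α)ᶜ) ∉ F) ∧
  (∀ p ∈ F, ∀ q : Set α × Set α, SepLE p q → IsSep q → f q.1 ≤ k → q ∈ F) ∧
  (∀ p ∈ F, ∀ q ∈ F, f (p.1 ∩ q.1) ≤ k → p.1 ∩ q.1 ≠ ∅)

/-- Single ultrafilter of separations of order `k+1`. -/
def IsSingleUltraSep (f : Set α → ℕ) (k : ℕ) (F : Set (Set α × Set α)) : Prop :=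
  (∀ p ∈ F, IsSep p ∧ f p.1 ≤ k) ∧
  (∀ A B : Set α, IsSep (A, B) → f A ≤ k → ((A, B) ∈ F ∨ (B, A) ∈ F)) ∧
  ((∅, (Set.univ : Set α)) ∉ F) ∧
  (∀ e : α, f {e} ≤ k → (({e} : Set α), ({e} : Set α)ᶜ) ∉ F) ∧
  (∀ p ∈ F, ∀ q : Set α × Set α, SepLE p q → IsSep q → f q.1 ≤ k → q ∈ F) ∧
  (∀ p ∈ F, ∀ e : α, f {e} ≤ k → f (p.1 \ {e}) ≤ k →
    (p.1 \ {e}, p.2 ∪ {e}) ∈ F)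

/-- Profile of separations of order `k+1`. -/
def IsProfileSep (f : Set α → ℕ) (k : ℕ) (P : Set (Set α × Set α)) : Prop :=
  (∀ p ∈ P, IsSep p ∧ f p.1 ≤ k) ∧
  (∀ A B : Set α, IsSep (A, B) → f A ≤ k → ((A, B) ∈ P ∨ (B, A) ∈ P)) ∧
  (∀ p : Set α × Set α, ∀ q ∈ P, SepLE p q → IsSep p → f p.1 ≤ k →
    (p.2, p.1) ∉ P) ∧
  (∀ p ∈ P, ∀ q ∈ P, (p.2 ∩ q.2, p.1 ∪ q.1) ∉ P)

/-- A profile is non-principal if it contains all small singleton separations. -/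
def NonPrincipalSep (f : Set α → ℕ) (k : ℕ) (P : Set (Set α × Set α)) : Prop :=
  ∀ e : α, f {e} ≤ k → (({e} : Set α), ({e} : Set α)ᶜ) ∈ P


lemma sep_compl {p : Set α × Set α} (h : IsSep p) : p.2 = p.1ᶜ := by
  obtain ⟨hu, hi⟩ := h
  ext x
  simp only [Set.mem_compl_iff]
  constructor
  · intro hx hx1
    have : x ∈ p.1 ∩ p.2 := ⟨hx1, hx⟩
    rw [hi] at this; exact this
  · intro hx
    have : x ∈ p.1 ∪ p.2 := by rw [hu]; trivial
    exact this.resolve_left hx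

lemma sep_swap {p : Set α × Set α} (h : IsSep p) : IsSep (p.2, p.1) := by
  obtain ⟨hu, hi⟩ := h
  exact ⟨by rw [Set.union_comm]; exact hu, by rw [Set.inter_comm]; exact hi⟩

theorem stmt6 [Fintype α] (f : Set α → ℕ) (hs : SymmFn f) (hm : SubmodFn f)
    (k : ℕ) (T : Set (Set α × Set α)) (hT : IsTangle f k T) :
    IsUltraSep f k {p : Set α × Set α | (p.2, p.1) ∈ T} := by
  obtain ⟨hT1, hT2, hT3, hT4⟩ := hT
  -- basic fact: members of T have f ≤ k on both sides
  have hf2 : ∀ p ∈ T, f p.2 ≤ k := by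
    intro p hp
    obtain ⟨hsep, hle⟩ := hT1 p hp
    rw [sep_compl hsep, ← hs]; exact hle
  refine ⟨?_, ?_, ?_, ?_, ?_, ?_⟩
  · intro p hp
    obtain ⟨hsep, _⟩ := hT1 _ hp
    refine ⟨⟨?_, ?_⟩, ?_⟩
    · rw [Set.union_comm]; exact hsep.1
    · rw [Set.inter_comm]; exact hsep.2
    · exact hf2 _ hp
  · intro A B hsep hA
    have hsep' : IsSep (B, A) := sep_swap hsep
    have hB : f B ≤ k := by
      have : B = Aᶜ := sep_compl hsep
      rw [this, ← hs]; exact hA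
    rcases hT2 B A hsep' hB with h | h
    · exact Or.inl h
    · exact Or.inr h
  · intro h
    simp only [Set.mem_setOf_eq] at h
    exact hT4 _ h _ h _ h (by simp)
  · intro e he h
    simp only [Set.mem_setOf_eq] at h
    exact hT4 _ (hT3 e he) _ h _ h (by simp)
  · intro p hp q hpq hq hfq
    simp only [Set.mem_setOf_eq] at hp ⊢
    have hq' : IsSep (q.2, q.1) := sep_swap hq
    have hfq2 : f q.2 ≤ k := by
      rw [sep_compl hq, ← hs]; exact hfq
    rcases hT2 q.2 q.1 hq' hfq2 with h | h
    · exact h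
    · exfalso
      apply hT4 _ h _ hp _ hp
      simp only
      apply Set.eq_univ_of_univ_subset
      rw [← hq.1]
      intro x hx
      rcases hx with hx | hx
      · left; left; exact hx
      · left; right; exact hpq.2 hx
  · intro p hp q hq hfk
    simp only [Set.mem_setOf_eq] at hp hq ⊢
    obtain ⟨hsp, _⟩ := hT1 _ hp
    obtain ⟨hsq, _⟩ := hT1 _ hq
    have hp2 : p.2 = p.1ᶜ := sep_compl (sep_swap hsp)
    have hq2 : q.2 = q.1ᶜ := sep_compl (sep_swap hsq)
    have hB : p.2 ∪ q.2 = (p.1 ∩ q.1)ᶜ := by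
      rw [hp2, hq2, Set.compl_inter]
    have hsepAB : IsSep (p.2 ∪ q.2, p.1 ∩ q.1) := by
      constructor
      · rw [hB]; simp
      · rw [hB]; simp
    have hfB : f (p.2 ∪ q.2) ≤ k := by
      rw [hB, ← hs]; exact hfk
    rcases hT2 _ _ hsepAB hfB with h | h
    · exact h
    · exfalso
      apply hT4 _ h _ hp _ hq
      simp only
      rw [Set.union_assoc, hB]
      simp
end

section
/- T is a tangle of separations of order k+1 on (X, f) if and only if F = {(A, B) : (B, A) ∈ T} is an ultrafilter of separations of order k+1 on (X, f). -/
open Set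

variable {α : Type*}

section Aux

variable {f : Set α → ℕ}

lemma part_compl {A B : Set α} (hu : A ∪ B = Set.univ) (hi : A ∩ B = ∅) :
    B = Aᶜ := by
  ext x
  have h1 : x ∈ A ∪ B := hu ▸ Set.mem_univ x
  have h2 : x ∉ A ∩ B := by rw [hi]; exact Set.notMem_empty x
  simp only [Set.mem_compl_iff]
  constructor
  · intro hB hA; exact h2 ⟨hA, hB⟩
  · intro hA; rcases h1 with h | h
    · exact absurd h hA
    · exact h

lemma isSep_self_compl (A : Set α) : IsSep (A, Aᶜ) :=
  ⟨Set.union_compl_self A, Set.inter_compl_self A⟩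

lemma f_empty_le (hs : SymmFn f) (hm : SubmodFn f) (A : Set α) :
    f ∅ ≤ f A := by
  have h := hm A Aᶜ
  rw [Set.inter_compl_self, Set.union_compl_self] at h
  have h2 : f (Set.univ : Set α) = f ∅ := by
    rw [hs ∅, Set.compl_empty]
  have h3 : f Aᶜ = f A := (hs A).symm
  omega

lemma posimod (hs : SymmFn f) (hm : SubmodFn f) (A B : Set α) :
    f (A \ B) + f (B \ A) ≤ f A + f B := by
  have h := hm A Bᶜ
  have e1 : A ∩ Bᶜ = A \ B := (Set.diff_eq A B).symm
  have e2 : A ∪ Bᶜ = (B \ A)ᶜ := by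
    rw [Set.diff_eq, Set.compl_inter, compl_compl]; exact Set.union_comm _ _
  rw [e1, e2] at h
  have h3 : f Bᶜ = f B := (hs B).symm
  have h4 : f (B \ A)ᶜ = f (B \ A) := (hs (B \ A)).symm
  omega

/-- Two members of an ultrafilter cannot have disjoint first components. -/
lemma ultra_disj {k : ℕ} {F : Set (Set α × Set α)} (hs : SymmFn f) (hm : SubmodFn f)
    (hF : IsUltraSep f k F) {q r : Set α × Set α} (hq : q ∈ F) (hr : r ∈ F)
    (h : q.1 ∩ r.1 = ∅) : False := by
  obtain ⟨hax1, _, hax3, _, _, hax6⟩ := hF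
  have hfq : f q.1 ≤ k := (hax1 q hq).2
  have hfint : f (q.1 ∩ r.1) ≤ k := by
    rw [h]; exact le_trans (f_empty_le hs hm q.1) hfq
  have h5 := hax6 q hq r hr hfint
  rw [h] at h5
  have hu := (hax1 _ h5).1.1
  simp only [Set.empty_union] at hu
  rw [hu] at h5
  exact hax3 h5

/-- Key lemma for deriving (T3): if `f (B₁ \ B₂) ≤ k` and `f (B₃ \ B₁) ≤ k`,
we get a contradiction. -/
lemma ultra_key {k : ℕ} {F : Set (Set α × Set α)} (hs : SymmFn f) (hm : SubmodFn f)
    (hF : IsUltraSep f k F) {B₁ A₁ B₂ A₂ B₃ A₃ : Set α}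
    (h1 : (B₁, A₁) ∈ F) (h2 : (B₂, A₂) ∈ F) (h3 : (B₃, A₃) ∈ F)
    (htriple : ∀ x, x ∈ B₁ → x ∈ B₂ → x ∈ B₃ → False)
    (hij : f (B₁ \ B₂) ≤ k) (hli : f (B₃ \ B₁) ≤ k) : False := by
  obtain ⟨hax1, hax2, hax3, hax4, hax5, hax6⟩ := hF
  rcases hax2 (B₁ \ B₂) (B₁ \ B₂)ᶜ (isSep_self_compl _) hij with hA | hG
  · -- (B₁ \ B₂, ...) ∈ F, but B₁ \ B₂ is disjoint from B₂
    exact ultra_disj hs hm ⟨hax1, hax2, hax3, hax4, hax5, hax6⟩ hA h2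
      (by ext x; simp only [Set.mem_inter_iff, Set.mem_diff, Set.mem_empty_iff_false,
            iff_false, not_and]; tauto)
  · -- ((B₁ \ B₂)ᶜ, B₁ \ B₂) ∈ F
    have hEq : (B₁ \ B₂)ᶜ ∩ B₃ = B₃ \ B₁ := by
      ext x
      have := htriple x
      simp only [Set.mem_inter_iff, Set.mem_compl_iff, Set.mem_diff]
      tauto
    have hfint : f (((B₁ \ B₂)ᶜ, B₁ \ B₂).1 ∩ (B₃, A₃).1) ≤ k := by
      simpa only [hEq] using hli
    have h5 := hax6 _ hG _ h3 hfint
    simp only at h5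
    rw [hEq] at h5
    exact ultra_disj hs hm ⟨hax1, hax2, hax3, hax4, hax5, hax6⟩ h5 h1
      (by ext x; simp only [Set.mem_inter_iff, Set.mem_diff, Set.mem_empty_iff_false,
            iff_false, not_and]; tauto)

end Aux

theorem stmt8 [Fintype α] (f : Set α → ℕ) (hs : SymmFn f) (hm : SubmodFn f)
    (k : ℕ) (T : Set (Set α × Set α)) :
    IsTangle f k T ↔ IsUltraSep f k {p : Set α × Set α | (p.2, p.1) ∈ T} := by
  constructor
  · rintro ⟨hT1, hT2, hT3, hT4⟩
    refine ⟨?_, ?_, ?_, ?_, ?_, ?_⟩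
    · -- members are separations of order ≤ k
      intro p hp
      obtain ⟨⟨hu, hi⟩, hf2⟩ := hT1 _ hp
      have hpc : p.1 = p.2ᶜ := part_compl hu hi
      refine ⟨⟨by rw [Set.union_comm]; exact hu, by rw [Set.inter_comm]; exact hi⟩, ?_⟩
      rw [hpc, ← hs p.2]; exact hf2
    · -- (F1)
      intro A B hsep hfA
      have hBc : B = Aᶜ := part_compl hsep.1 hsep.2
      have hfB : f B ≤ k := by rw [hBc, ← hs A]; exact hfA
      have hsep' : IsSep (B, A) :=
        ⟨by rw [Set.union_comm]; exact hsep.1, by rw [Set.inter_comm]; exact hsep.2⟩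
      rcases hT2 B A hsep' hfB with h | h
      · exact Or.inl h
      · exact Or.inr h
    · -- (F2)
      intro h
      have h' : ((Set.univ : Set α), (∅ : Set α)) ∈ T := h
      exact hT4 _ h' _ h' _ h' (by simp)
    · -- (F3)
      intro e hfe h
      have h' : (({e} : Set α)ᶜ, ({e} : Set α)) ∈ T := h
      have h2 := hT3 e hfe
      refine hT4 _ h' _ h2 _ h2 ?_
      simp only
      rw [Set.union_assoc, Set.union_self, Set.compl_union_self]
    · -- (F4)
      intro p hp q hle hsepq hfq
      have hp' : (p.2, p.1) ∈ T := hp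
      obtain ⟨⟨hu, hi⟩, _⟩ := hT1 _ hp'
      have hqc : q.2 = q.1ᶜ := part_compl hsepq.1 hsepq.2
      have hfq2 : f q.2 ≤ k := by rw [hqc, ← hs q.1]; exact hfq
      have hsepq' : IsSep (q.2, q.1) :=
        ⟨by rw [Set.union_comm]; exact hsepq.1, by rw [Set.inter_comm]; exact hsepq.2⟩
      rcases hT2 q.2 q.1 hsepq' hfq2 with h | h
      · exact h
      · exfalso
        refine hT4 _ hp' _ h _ h ?_
        simp only
        apply Set.eq_univ_of_univ_subset
        intro x _
        simp only [Set.mem_union]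
        by_cases hx : x ∈ p.1
        · exact Or.inl (Or.inr (hle.1 hx))
        · have hx2 : x ∈ p.2 ∪ p.1 := hu ▸ Set.mem_univ x
          rcases hx2 with h' | h'
          · exact Or.inl (Or.inl h')
          · exact absurd h' hx
    · -- (F5)
      intro p hp q hq hfk
      have hp' : (p.2, p.1) ∈ T := hp
      have hq' : (q.2, q.1) ∈ T := hq
      obtain ⟨⟨hup, hip⟩, _⟩ := hT1 _ hp'
      obtain ⟨⟨huq, hiq⟩, _⟩ := hT1 _ hq'
      have hpx : ∀ x : α, x ∈ p.1 ∨ x ∈ p.2 := by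
        intro x
        have hx : x ∈ p.2 ∪ p.1 := hup ▸ Set.mem_univ x
        rcases hx with h | h
        · exact Or.inr h
        · exact Or.inl h
      have hqx : ∀ x : α, x ∈ q.1 ∨ x ∈ q.2 := by
        intro x
        have hx : x ∈ q.2 ∪ q.1 := huq ▸ Set.mem_univ x
        rcases hx with h | h
        · exact Or.inr h
        · exact Or.inl h
      have hpd : ∀ x : α, x ∈ p.2 → x ∈ p.1 → False := by
        intro x h1 h2
        have : x ∈ p.2 ∩ p.1 := ⟨h1, h2⟩
        rw [hip] at this; exact this
      have hqd : ∀ x : α, x ∈ q.2 → x ∈ q.1 → False := by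
        intro x h1 h2
        have : x ∈ q.2 ∩ q.1 := ⟨h1, h2⟩
        rw [hiq] at this; exact this
      have hcompl : p.2 ∪ q.2 = (p.1 ∩ q.1)ᶜ := by
        ext x
        simp only [Set.mem_union, Set.mem_compl_iff, Set.mem_inter_iff]
        constructor
        · rintro (h | h) ⟨h1, h2⟩
          · exact hpd x h h1
          · exact hqd x h h2
        · intro h
          rcases hpx x with h1 | h1
          · rcases hqx x with h2 | h2
            · exact absurd ⟨h1, h2⟩ h
            · exact Or.inr h2
          · exact Or.inl h1
      have hsep : IsSep (p.2 ∪ q.2, p.1 ∩ q.1) := by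
        constructor
        · rw [hcompl]; exact Set.compl_union_self _
        · rw [hcompl]; exact Set.compl_inter_self _
      have hfU : f (p.2 ∪ q.2) ≤ k := by
        rw [hcompl, ← hs (p.1 ∩ q.1)]; exact hfk
      rcases hT2 (p.2 ∪ q.2) (p.1 ∩ q.1) hsep hfU with h | h
      · exact h
      · exfalso
        refine hT4 _ hp' _ hq' _ h ?_
        simp only
        apply Set.eq_univ_of_univ_subset
        intro x _
        simp only [Set.mem_union, Set.mem_inter_iff]
        rcases hpx x with h1 | h1
        · rcases hqx x with h2 | h2
          · exact Or.inr ⟨h1, h2⟩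
          · exact Or.inl (Or.inr h2)
        · exact Or.inl (Or.inl h1)
  · intro hF
    obtain ⟨hax1, hax2, hax3, hax4, hax5, hax6⟩ := hF
    refine ⟨?_, ?_, ?_, ?_⟩
    · -- members are separations of order ≤ k
      intro p hp
      have hp' : (p.2, p.1) ∈ {p : Set α × Set α | (p.2, p.1) ∈ T} := hp
      obtain ⟨⟨hu, hi⟩, hf2⟩ := hax1 _ hp'
      simp only at hu hi hf2
      have hpc : p.1 = p.2ᶜ := part_compl hu hi
      refine ⟨⟨by rw [Set.union_comm]; exact hu, by rw [Set.inter_comm]; exact hi⟩, ?_⟩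
      rw [hpc, ← hs p.2]; exact hf2
    · -- (T1)
      intro A B hsep hfA
      have hBc : B = Aᶜ := part_compl hsep.1 hsep.2
      have hfB : f B ≤ k := by rw [hBc, ← hs A]; exact hfA
      have hsep' : IsSep (B, A) :=
        ⟨by rw [Set.union_comm]; exact hsep.1, by rw [Set.inter_comm]; exact hsep.2⟩
      rcases hax2 B A hsep' hfB with h | h
      · exact Or.inl h
      · exact Or.inr h
    · -- (T2)
      intro e hfe
      have hfec : f ({e} : Set α)ᶜ ≤ k := by rw [← hs {e}]; exact hfe
      have hsep : IsSep (({e} : Set α)ᶜ, ({e} : Set α)) := by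
        constructor
        · exact Set.compl_union_self _
        · rw [Set.inter_comm]; exact Set.inter_compl_self _
      rcases hax2 _ _ hsep hfec with h | h
      · exact h
      · exact absurd h (hax4 e hfe)
    · -- (T3)
      intro p₁ hp₁ p₂ hp₂ p₃ hp₃ hcov
      have h1 : (p₁.2, p₁.1) ∈ {p : Set α × Set α | (p.2, p.1) ∈ T} := hp₁
      have h2 : (p₂.2, p₂.1) ∈ {p : Set α × Set α | (p.2, p.1) ∈ T} := hp₂
      have h3 : (p₃.2, p₃.1) ∈ {p : Set α × Set α | (p.2, p.1) ∈ T} := hp₃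
      obtain ⟨⟨hu1, hi1⟩, hf1⟩ := hax1 _ h1
      obtain ⟨⟨hu2, hi2⟩, hf2⟩ := hax1 _ h2
      obtain ⟨⟨hu3, hi3⟩, hf3⟩ := hax1 _ h3
      simp only at hu1 hi1 hf1 hu2 hi2 hf2 hu3 hi3 hf3
      set B₁ := p₁.2
      set B₂ := p₂.2
      set B₃ := p₃.2
      have hF' : IsUltraSep f k {p : Set α × Set α | (p.2, p.1) ∈ T} :=
        ⟨hax1, hax2, hax3, hax4, hax5, hax6⟩
      have htriple : ∀ x, x ∈ B₁ → x ∈ B₂ → x ∈ B₃ → False := by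
        intro x hx1 hx2 hx3
        have hxu : x ∈ p₁.1 ∪ p₂.1 ∪ p₃.1 := hcov ▸ Set.mem_univ x
        rcases hxu with (h | h) | h
        · have : x ∈ B₁ ∩ p₁.1 := ⟨hx1, h⟩
          rw [hi1] at this; exact this
        · have : x ∈ B₂ ∩ p₂.1 := ⟨hx2, h⟩
          rw [hi2] at this; exact this
        · have : x ∈ B₃ ∩ p₃.1 := ⟨hx3, h⟩
          rw [hi3] at this; exact this
      have hd12 : f (B₁ \ B₂) ≤ k ∨ f (B₂ \ B₁) ≤ k := by
        have := posimod hs hm B₁ B₂; omega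
      have hd13 : f (B₁ \ B₃) ≤ k ∨ f (B₃ \ B₁) ≤ k := by
        have := posimod hs hm B₁ B₃; omega
      have hd23 : f (B₂ \ B₃) ≤ k ∨ f (B₃ \ B₂) ≤ k := by
        have := posimod hs hm B₂ B₃; omega
      rcases hd12 with d12 | d21 <;> rcases hd13 with d13 | d31 <;>
        rcases hd23 with d23 | d32
      · -- d12, d13, d23 : use (i,j,l) = (2,3,1)
        exact ultra_key hs hm hF' h2 h3 h1 (fun x a b c => htriple x c a b) d23 d12
      · -- d12, d13, d32 : use (i,j,l) = (3,2,1)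
        exact ultra_key hs hm hF' h3 h2 h1 (fun x a b c => htriple x c b a) d32 d13
      · -- d12, d31, d23 : use (i,j,l) = (1,2,3)
        exact ultra_key hs hm hF' h1 h2 h3 htriple d12 d31
      · -- d12, d31, d32 : use (i,j,l) = (1,2,3)
        exact ultra_key hs hm hF' h1 h2 h3 htriple d12 d31
      · -- d21, d13, d23 : use (i,j,l) = (1,3,2)
        exact ultra_key hs hm hF' h1 h3 h2 (fun x a b c => htriple x a c b) d13 d21
      · -- d21, d13, d32 : use (i,j,l) = (1,3,2)
        exact ultra_key hs hm hF' h1 h3 h2 (fun x a b c => htriple x a c b) d13 d21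
      · -- d21, d31, d23 : use (i,j,l) = (3,1,2)
        exact ultra_key hs hm hF' h3 h1 h2 (fun x a b c => htriple x b c a) d31 d23
      · -- d21, d31, d32 : use (i,j,l) = (2,1,3)
        exact ultra_key hs hm hF' h2 h1 h3 (fun x a b c => htriple x b a c) d21 d32
end

section
/- If F is an ultrafilter of separations in (X, f) of order k+1, then for any (A₁, B₁), (A₂, B₂), (A₃, B₃) ∈ F, the intersection A₁ ∩ A₂ ∩ A₃ is non-empty. -/
open Set

variable {α : Type*}

lemma aux_empty10 (f : Set α → ℕ) (hs : SymmFn f) (hm : SubmodFn f) (k : ℕ)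
    (F : Set (Set α × Set α)) (hF : IsUltraSep f k F)
    (A B C : Set α) (hA : (A, Aᶜ) ∈ F) (hB : (B, Bᶜ) ∈ F) (hC : (C, Cᶜ) ∈ F)
    (hemp : ∀ x, x ∈ A → x ∈ B → x ∈ C → False)
    (h1 : f (A ∩ Bᶜ) ≤ k) (h2 : f (C ∩ Aᶜ) ≤ k) : False := by
  obtain ⟨hmem, hF1, hF2, -, -, hF5⟩ := hF
  have hfA : f A ≤ k := (hmem _ hA).2
  have hempty : f (∅ : Set α) ≤ k := by
    have hsub := hm A Aᶜ
    rw [inter_compl_self, union_compl_self] at hsub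
    have e1 : f Aᶜ = f A := (hs A).symm
    have e2 : f (univ : Set α) = f (∅ : Set α) := by
      have := hs (∅ : Set α)
      simpa using this.symm
    omega
  have lem1 : ∀ S T U : Set α, (S, T) ∈ F → (U, Uᶜ) ∈ F → S ∩ U = ∅ → False := by
    intro S T U hST hU hSU
    have hle : f ((S, T).1 ∩ (U, Uᶜ).1) ≤ k := by
      show f (S ∩ U) ≤ k
      rw [hSU]; exact hempty
    have h5 : (S ∩ U, T ∪ Uᶜ) ∈ F := hF5 _ hST _ hU hle
    rw [hSU] at h5
    have hsep := (hmem _ h5).1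
    have huniv : T ∪ Uᶜ = univ := by
      have := hsep.1
      simpa using this
    rw [huniv] at h5
    exact hF2 h5
  have hsepS : IsSep ((A ∩ Bᶜ), (A ∩ Bᶜ)ᶜ) := ⟨union_compl_self _, inter_compl_self _⟩
  rcases hF1 _ _ hsepS h1 with hOr | hOr
  · refine lem1 _ _ _ hOr hB ?_
    ext x
    simp only [mem_inter_iff, mem_compl_iff, mem_empty_iff_false, iff_false]
    tauto
  · -- hOr : ((A ∩ Bᶜ)ᶜ, A ∩ Bᶜ) ∈ F
    have hint : (A ∩ Bᶜ)ᶜ ∩ C = C ∩ Aᶜ := by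
      ext x
      have := hemp x
      simp only [mem_inter_iff, mem_compl_iff, not_and, not_not]
      tauto
    have hle : f (((A ∩ Bᶜ)ᶜ, A ∩ Bᶜ).1 ∩ (C, Cᶜ).1) ≤ k := by
      show f ((A ∩ Bᶜ)ᶜ ∩ C) ≤ k
      rw [hint]; exact h2
    have h5 : ((A ∩ Bᶜ)ᶜ ∩ C, (A ∩ Bᶜ) ∪ Cᶜ) ∈ F := hF5 _ hOr _ hC hle
    rw [hint] at h5
    refine lem1 _ _ _ h5 hA ?_
    ext x
    simp only [mem_inter_iff, mem_compl_iff, mem_empty_iff_false, iff_false]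
    tauto

theorem stmt10 [Fintype α] (f : Set α → ℕ) (hs : SymmFn f) (hm : SubmodFn f)
    (k : ℕ) (F : Set (Set α × Set α)) (hF : IsUltraSep f k F) :
    ∀ p₁ ∈ F, ∀ p₂ ∈ F, ∀ p₃ ∈ F,
      p₁.1 ∩ p₂.1 ∩ p₃.1 ≠ (∅ : Set α) := by
  intro p1 h1 p2 h2 p3 h3 hcon
  have hc : ∀ p : Set α × Set α, p ∈ F → p.2 = p.1ᶜ := by
    intro p hp
    obtain ⟨⟨hu, hi⟩, -⟩ := hF.1 p hp
    ext x
    simp only [mem_compl_iff]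
    constructor
    · intro hx2 hx1
      have hmem : x ∈ p.1 ∩ p.2 := ⟨hx1, hx2⟩
      rw [hi] at hmem
      exact hmem
    · intro hx1
      have hmem : x ∈ p.1 ∪ p.2 := by rw [hu]; exact mem_univ x
      exact hmem.resolve_left hx1
  have m1 : (p1.1, p1.1ᶜ) ∈ F := by
    have : p1 = (p1.1, p1.1ᶜ) := Prod.ext rfl (hc p1 h1)
    rw [← this]; exact h1
  have m2 : (p2.1, p2.1ᶜ) ∈ F := by
    have : p2 = (p2.1, p2.1ᶜ) := Prod.ext rfl (hc p2 h2)
    rw [← this]; exact h2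
  have m3 : (p3.1, p3.1ᶜ) ∈ F := by
    have : p3 = (p3.1, p3.1ᶜ) := Prod.ext rfl (hc p3 h3)
    rw [← this]; exact h3
  have hf1 : f p1.1 ≤ k := (hF.1 p1 h1).2
  have hf2 : f p2.1 ≤ k := (hF.1 p2 h2).2
  have hf3 : f p3.1 ≤ k := (hF.1 p3 h3).2
  have hx : ∀ x, x ∈ p1.1 → x ∈ p2.1 → x ∈ p3.1 → False := by
    intro x a b c
    have hmem : x ∈ p1.1 ∩ p2.1 ∩ p3.1 := ⟨⟨a, b⟩, c⟩
    rw [hcon] at hmem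
    exact hmem
  have key : ∀ A B : Set α, f A ≤ k → f B ≤ k →
      f (A ∩ Bᶜ) ≤ k ∨ f (B ∩ Aᶜ) ≤ k := by
    intro A B hA hB
    have hsub := hm A Bᶜ
    have e1 : f Bᶜ = f B := (hs B).symm
    have e2 : f (A ∪ Bᶜ) = f (B ∩ Aᶜ) := by
      rw [hs (A ∪ Bᶜ)]
      congr 1
      rw [compl_union, compl_compl, inter_comm]
    omega
  rcases key p1.1 p2.1 hf1 hf2 with x12 | x21 <;>
    rcases key p2.1 p3.1 hf2 hf3 with y23 | y32 <;>
      rcases key p1.1 p3.1 hf1 hf3 with z13 | z31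
  · exact aux_empty10 f hs hm k F hF _ _ _ m2 m3 m1
      (fun x a b c => hx x c a b) y23 x12
  · exact aux_empty10 f hs hm k F hF _ _ _ m1 m2 m3
      (fun x a b c => hx x a b c) x12 z31
  · exact aux_empty10 f hs hm k F hF _ _ _ m3 m2 m1
      (fun x a b c => hx x c b a) y32 z13
  · exact aux_empty10 f hs hm k F hF _ _ _ m1 m2 m3
      (fun x a b c => hx x a b c) x12 z31
  · exact aux_empty10 f hs hm k F hF _ _ _ m1 m3 m2
      (fun x a b c => hx x a c b) z13 x21
  · exact aux_empty10 f hs hm k F hF _ _ _ m3 m1 m2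
      (fun x a b c => hx x b c a) z31 y23
  · exact aux_empty10 f hs hm k F hF _ _ _ m2 m1 m3
      (fun x a b c => hx x b a c) x21 y32
  · exact aux_empty10 f hs hm k F hF _ _ _ m2 m1 m3
      (fun x a b c => hx x b a c) x21 y32
end

section
/- There exists a tangle of separations of order k+1 on (X, f) if and only if there exists a non-principal profile of separations of order k+1 on (X, f). -/
open Set

variable {α : Type*}

/-- In a separation, the second side is the complement of the first. -/
lemma IsSep.snd_eq_compl {A B : Set α} (h : IsSep (A, B)) : B = Aᶜ := by
  obtain ⟨hu, hi⟩ := h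
  simp only [Prod.fst, Prod.snd] at hu hi
  ext x
  constructor
  · intro hB hA
    exact Set.eq_empty_iff_forall_notMem.mp hi x ⟨hA, hB⟩
  · intro hA
    rcases (Set.eq_univ_iff_forall.mp hu x) with h | h
    · exact absurd h hA
    · exact h

/-- Corner lemma: a corner of two profile separations with small order is in the profile. -/
lemma corner_mem {f : Set α → ℕ} {k : ℕ} {P : Set (Set α × Set α)}
    (hP : IsProfileSep f k P) {A B C D : Set α}
    (hA : (A, B) ∈ P) (hC : (C, D) ∈ P) (hf : f (A ∩ D) ≤ k) :
    (A ∩ D, B ∪ C) ∈ P := by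
  obtain ⟨h0, h1, h2, _⟩ := hP
  have hsA : IsSep (A, B) := (h0 _ hA).1
  have hsC : IsSep (C, D) := (h0 _ hC).1
  have hBA : B = Aᶜ := hsA.snd_eq_compl
  have hDC : D = Cᶜ := hsC.snd_eq_compl
  have hsep : IsSep (A ∩ D, B ∪ C) := by
    constructor
    · simp only [Prod.fst, Prod.snd]
      rw [hBA, hDC]
      ext x; simp only [Set.mem_union, Set.mem_inter_iff, Set.mem_compl_iff,
        Set.mem_univ, iff_true]
      tauto
    · simp only [Prod.fst, Prod.snd]
      rw [hBA, hDC]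
      ext x; simp only [Set.mem_union, Set.mem_inter_iff, Set.mem_compl_iff,
        Set.mem_empty_iff_false, iff_false]
      tauto
  have hle : SepLE (A ∩ D, B ∪ C) (A, B) :=
    ⟨Set.inter_subset_left, Set.subset_union_left⟩
  have hnot : (B ∪ C, A ∩ D) ∉ P := h2 _ _ hA hle hsep hf
  rcases h1 _ _ hsep hf with h | h
  · exact h
  · exact absurd h hnot

/-- Shrinking lemma: two crossing profile separations can be uncrossed, decreasing size. -/
lemma shrink [Fintype α] {f : Set α → ℕ} (hs : SymmFn f) (hm : SubmodFn f)
    {k : ℕ} {P : Set (Set α × Set α)} (hP : IsProfileSep f k P) {A B C D : Set α}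
    (hA : (A, B) ∈ P) (hC : (C, D) ∈ P) (hne : (A ∩ C).Nonempty) :
    ∃ A' B' C' D' : Set α, (A', B') ∈ P ∧ (C', D') ∈ P ∧
      A' ∪ C' = A ∪ C ∧ A'.ncard + C'.ncard < A.ncard + C.ncard := by
  have h0 := hP.1
  have hsA : IsSep (A, B) := (h0 _ hA).1
  have hsC : IsSep (C, D) := (h0 _ hC).1
  have hBA : B = Aᶜ := hsA.snd_eq_compl
  have hDC : D = Cᶜ := hsC.snd_eq_compl
  have hfA : f A ≤ k := (h0 _ hA).2
  have hfC : f C ≤ k := (h0 _ hC).2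
  have hfD : f D = f C := by rw [hDC, ← hs C]
  have hsub := hm A D
  have hAD : f (A ∪ D) = f (B ∩ C) := by
    rw [hs (A ∪ D), Set.compl_union, hBA, hDC, compl_compl]
  obtain ⟨x, hxA, hxC⟩ := hne
  by_cases hsm : f (A ∩ D) ≤ k
  · refine ⟨A ∩ D, B ∪ C, C, D, corner_mem hP hA hC hsm, hC, ?_, ?_⟩
    · ext y
      simp only [Set.mem_union, Set.mem_inter_iff]
      constructor
      · tauto
      · rintro (hy | hy)
        · by_cases hyC : y ∈ C
          · tauto
          · exact Or.inl ⟨hy, by rw [hDC]; exact hyC⟩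
        · tauto
    · have hss : A ∩ D ⊂ A := by
        refine ⟨Set.inter_subset_left, fun hsub' => ?_⟩
        have : x ∈ A ∩ D := hsub' hxA
        rw [hDC] at this
        exact this.2 hxC
      have := Set.ncard_lt_ncard hss (Set.toFinite A)
      omega
  · have hsm' : f (C ∩ B) ≤ k := by
      rw [Set.inter_comm]
      rw [hAD] at hsub
      have := hfD
      omega
    refine ⟨A, B, C ∩ B, D ∪ A, hA, corner_mem hP hC hA hsm', ?_, ?_⟩
    · ext y
      simp only [Set.mem_union, Set.mem_inter_iff]
      constructor
      · tauto
      · rintro (hy | hy)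
        · tauto
        · by_cases hyA : y ∈ A
          · tauto
          · exact Or.inr ⟨hy, by rw [hBA]; exact hyA⟩
    · have hss : C ∩ B ⊂ C := by
        refine ⟨Set.inter_subset_left, fun hsub' => ?_⟩
        have : x ∈ C ∩ B := hsub' hxC
        rw [hBA] at this
        exact this.2 hxA
      have := Set.ncard_lt_ncard hss (Set.toFinite C)
      omega

/-- Main lemma: in a profile, no three small sides cover the ground set. -/
lemma no_cover3 [Fintype α] {f : Set α → ℕ} (hs : SymmFn f) (hm : SubmodFn f)
    {k : ℕ} {P : Set (Set α × Set α)} (hP : IsProfileSep f k P) :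
    ∀ p₁ ∈ P, ∀ p₂ ∈ P, ∀ p₃ ∈ P, p₁.1 ∪ p₂.1 ∪ p₃.1 ≠ (Set.univ : Set α) := by
  have key : ∀ n : ℕ, ∀ A₁ B₁ A₂ B₂ A₃ B₃ : Set α,
      A₁.ncard + A₂.ncard + A₃.ncard = n →
      (A₁, B₁) ∈ P → (A₂, B₂) ∈ P → (A₃, B₃) ∈ P →
      A₁ ∪ A₂ ∪ A₃ ≠ (Set.univ : Set α) := by
    intro n
    induction n using Nat.strong_induction_on with
    | _ n ih =>
      intro A₁ B₁ A₂ B₂ A₃ B₃ hn h1 h2 h3 hcov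
      by_cases h12 : (A₁ ∩ A₂).Nonempty
      · obtain ⟨A', B', C', D', hA', hC', huni, hlt⟩ := shrink hs hm hP h1 h2 h12
        exact ih (A'.ncard + C'.ncard + A₃.ncard) (by omega) A' B' C' D' A₃ B₃ rfl
          hA' hC' h3 (by rw [huni]; exact hcov)
      by_cases h13 : (A₁ ∩ A₃).Nonempty
      · obtain ⟨A', B', C', D', hA', hC', huni, hlt⟩ := shrink hs hm hP h1 h3 h13
        exact ih (A'.ncard + A₂.ncard + C'.ncard) (by omega) A' B' A₂ B₂ C' D' rfl
          hA' h2 hC'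
          (by rw [Set.union_right_comm, huni, Set.union_right_comm]; exact hcov)
      by_cases h23 : (A₂ ∩ A₃).Nonempty
      · obtain ⟨A', B', C', D', hA', hC', huni, hlt⟩ := shrink hs hm hP h2 h3 h23
        exact ih (A₁.ncard + A'.ncard + C'.ncard) (by omega) A₁ B₁ A' B' C' D' rfl
          h1 hA' hC'
          (by rw [Set.union_assoc, huni, ← Set.union_assoc]; exact hcov)
      -- disjoint case
      · have h0 := hP.1
        have hB1 : B₁ = A₁ᶜ := ((h0 _ h1).1).snd_eq_compl
        have hB2 : B₂ = A₂ᶜ := ((h0 _ h2).1).snd_eq_compl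
        have hB3 : B₃ = A₃ᶜ := ((h0 _ h3).1).snd_eq_compl
        have hd12 : A₁ ∩ A₂ = ∅ := Set.not_nonempty_iff_eq_empty.mp h12
        have hd13 : A₁ ∩ A₃ = ∅ := Set.not_nonempty_iff_eq_empty.mp h13
        have hd23 : A₂ ∩ A₃ = ∅ := Set.not_nonempty_iff_eq_empty.mp h23
        have hA3 : A₃ = B₁ ∩ B₂ := by
          rw [hB1, hB2]
          ext y
          simp only [Set.mem_inter_iff, Set.mem_compl_iff]
          constructor
          · intro hy
            constructor
            · intro hy1; exact Set.eq_empty_iff_forall_notMem.mp hd13 y ⟨hy1, hy⟩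
            · intro hy2; exact Set.eq_empty_iff_forall_notMem.mp hd23 y ⟨hy2, hy⟩
          · intro ⟨hy1, hy2⟩
            have := Set.eq_univ_iff_forall.mp hcov y
            simp only [Set.mem_union] at this
            tauto
        have hB3' : B₃ = A₁ ∪ A₂ := by
          rw [hB3, hA3, hB1, hB2, Set.compl_inter, compl_compl, compl_compl]
        exact hP.2.2.2 _ h1 _ h2 (by rw [← hA3, ← hB3']; exact h3)

  intro p₁ hp₁ p₂ hp₂ p₃ hp₃
  have e1 : p₁ = (p₁.1, p₁.2) := rfl
  have e2 : p₂ = (p₂.1, p₂.2) := rfl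
  have e3 : p₃ = (p₃.1, p₃.2) := rfl
  exact key _ p₁.1 p₁.2 p₂.1 p₂.2 p₃.1 p₃.2 rfl (e1 ▸ hp₁) (e2 ▸ hp₂) (e3 ▸ hp₃)

theorem stmt14 [Fintype α] (f : Set α → ℕ) (hs : SymmFn f) (hm : SubmodFn f)
    (k : ℕ) :
    (∃ T : Set (Set α × Set α), IsTangle f k T) ↔
      (∃ P : Set (Set α × Set α), IsProfileSep f k P ∧ NonPrincipalSep f k P) := by
  constructor
  · rintro ⟨T, h0, h1, h2, h3⟩
    refine ⟨T, ⟨h0, h1, ?_, ?_⟩, h2⟩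
    · intro p q hq hle hsp hfp hmem
      refine h3 q hq (p.2, p.1) hmem (p.2, p.1) hmem ?_
      have hu : q.1 ∪ q.2 = Set.univ := ((h0 q hq).1).1
      apply Set.eq_univ_of_univ_subset
      rw [← hu]
      intro x hx
      simp only [Set.mem_union]
      rcases hx with hx | hx
      · exact Or.inl (Or.inl hx)
      · exact Or.inl (Or.inr (hle.2 hx))
    · intro p hp q hq hmem
      refine h3 p hp q hq (p.2 ∩ q.2, p.1 ∪ q.1) hmem ?_
      have hup : p.1 ∪ p.2 = Set.univ := ((h0 p hp).1).1
      have huq : q.1 ∪ q.2 = Set.univ := ((h0 q hq).1).1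
      apply Set.eq_univ_of_forall
      intro x
      simp only [Set.mem_union, Set.mem_inter_iff]
      by_cases hx1 : x ∈ p.1
      · tauto
      by_cases hx2 : x ∈ q.1
      · tauto
      have h1' := Set.eq_univ_iff_forall.mp hup x
      have h2' := Set.eq_univ_iff_forall.mp huq x
      simp only [Set.mem_union] at h1' h2'
      tauto
  · rintro ⟨P, hP, hnp⟩
    exact ⟨P, hP.1, hP.2.1, hnp, no_cover3 hs hm hP⟩
end
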